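/- Let I be a monomial ideal in R = K[x_1,...,x_n] and x_w a new variable. If I is normally torsion-free, then x_w · I (in R[x_w]) is normally torsion-free. -/

import Mathlib

open MvPolynomial

/-- `I` is a monomial ideal: it is generated by monomials. -/
def IsMonomialIdeal {K : Type*} [Field K] {n : ℕ} (I : Ideal (MvPolynomial (Fin n) K)) : Prop :=
  ∃ S : Set ((Fin n) →₀ ℕ), I = Ideal.span ((fun d => monomial d (1 : K)) '' S)

/-- `I` is normally torsion-free. -/
def NormallyTorsionFree {R : Type*} [CommRing R] (I : Ideal R) : Prop :=
  ∀ k : ℕ, 1 ≤ k → associatedPrimes R (R ⧸ I ^ k) ⊆ associatedPrimes R (R ⧸ I)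


lemma mem_assPrimes_quot_iff {R : Type*} [CommRing R] [IsNoetherianRing R] {N p : Ideal R} :
    p ∈ associatedPrimes R (R ⧸ N) ↔ p.IsPrime ∧ ∃ f : R, p = N.colon (Ideal.span {f}) := by
  rw [AssociatedPrimes.mem_iff, isAssociatedPrime_iff]
  constructor
  · rintro ⟨hp, x, hx⟩
    obtain ⟨f, rfl⟩ := Ideal.Quotient.mk_surjective x
    refine ⟨hp, f, ?_⟩
    ext a
    rw [hx, Submodule.mem_colon_singleton, Ideal.mem_colon_span_singleton,
      ← Ideal.Quotient.mk_eq_mk, ← Submodule.Quotient.mk_smul, Submodule.mem_bot,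
      Submodule.Quotient.mk_eq_zero, smul_eq_mul]
  · rintro ⟨hp, f, hf⟩
    refine ⟨hp, Ideal.Quotient.mk N f, ?_⟩
    ext a
    rw [hf, Submodule.mem_colon_singleton, Ideal.mem_colon_span_singleton,
      ← Ideal.Quotient.mk_eq_mk, ← Submodule.Quotient.mk_smul, Submodule.mem_bot,
      Submodule.Quotient.mk_eq_zero, smul_eq_mul]

lemma colon_map_equiv {R S : Type*} [CommRing R] [CommRing S] (e : R ≃+* S)
    (N : Ideal R) (f : R) :
    (N.colon (Ideal.span {f})).map e = (N.map e).colon (Ideal.span {e f}) := by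
  ext h
  rw [← Ideal.comap_symm, Ideal.mem_comap, Ideal.mem_colon_span_singleton,
    Ideal.mem_colon_span_singleton, ← Ideal.apply_mem_of_equiv_iff (f := e), map_mul,
    RingEquiv.apply_symm_apply]

lemma isPrime_map_equiv {R S : Type*} [CommRing R] [CommRing S] (e : R ≃+* S)
    {p : Ideal R} (hp : p.IsPrime) : (p.map e).IsPrime := by
  rw [← Ideal.comap_symm]
  exact Ideal.comap_isPrime _ _


lemma poly_colon_structure {A : Type*} [CommRing A] {N : Ideal A} {p : Ideal (Polynomial A)}
    (hp : p.IsPrime) {f : Polynomial A}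
    (hf : f ∉ N.map (Polynomial.C : A →+* Polynomial A))
    (hcolon : p = (N.map (Polynomial.C : A →+* Polynomial A)).colon (Ideal.span {f})) :
    ∃ c : A, c ∉ N ∧
      N.colon (Ideal.span {c}) = p.comap (Polynomial.C : A →+* Polynomial A) ∧
      p = (p.comap (Polynomial.C : A →+* Polynomial A)).map
          (Polynomial.C : A →+* Polynomial A) := by
  set q : Ideal A := p.comap (Polynomial.C : A →+* Polynomial A) with hqdef
  haveI := hp
  have hq : q.IsPrime := Ideal.comap_isPrime _ _
  -- membership in q in terms of coefficients
  have haq : ∀ g : Polynomial A, p = (N.map (Polynomial.C : A →+* Polynomial A)).colon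
      (Ideal.span {g}) → ∀ a : A, a ∈ q ↔ ∀ m, a * g.coeff m ∈ N := by
    intro g hg a
    rw [hqdef, Ideal.mem_comap, hg, Ideal.mem_colon_span_singleton, Ideal.mem_map_C_iff]
    constructor
    · intro h m; simpa [Polynomial.coeff_C_mul] using h m
    · intro h m; simpa [Polynomial.coeff_C_mul] using h m
  -- descent
  have descent : ∀ d : ℕ, ∀ g : Polynomial A,
      g ∉ N.map (Polynomial.C : A →+* Polynomial A) →
      p = (N.map (Polynomial.C : A →+* Polynomial A)).colon (Ideal.span {g}) →
      (∀ i, d < i → g.coeff i ∈ N) → p ≤ q.map (Polynomial.C : A →+* Polynomial A) := by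
    intro d
    induction d using Nat.strong_induction_on with
    | _ d IH =>
      intro g hg hcg hhigh
      by_contra hnle
      obtain ⟨h, hhp, hhq⟩ := SetLike.not_le_iff_exists.mp hnle
      -- in the case where also g.coeff d ∈ N, descend directly
      by_cases hgd : g.coeff d ∈ N
      · rcases d with - | d'
        · exact hg (Ideal.mem_map_C_iff.mpr fun i => by
            rcases Nat.eq_zero_or_pos i with rfl | hi
            · exact hgd
            · exact hhigh i hi)
        · exact hnle (IH d' (Nat.lt_succ_self d') g hg hcg (fun i hi => by
            rcases eq_or_lt_of_le (Nat.succ_le_of_lt hi) with rfl | hlt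
            · exact hgd
            · exact hhigh _ hlt))
      -- main case
      have hhq' : ∃ i, h.coeff i ∉ q := by
        by_contra hall
        push_neg at hall
        exact hhq (Ideal.mem_map_C_iff.mpr hall)
      obtain ⟨i₀, hi₀⟩ := hhq'
      classical
      set s : Finset ℕ := h.support.filter (fun i => h.coeff i ∉ q) with hsdef
      have hsne : s.Nonempty := ⟨i₀, Finset.mem_filter.mpr
        ⟨Polynomial.mem_support_iff.mpr (fun h0 => hi₀ (h0 ▸ q.zero_mem)), hi₀⟩⟩
      set e := s.max' hsne with hedef
      have hce : h.coeff e ∉ q := (Finset.mem_filter.mp (s.max'_mem hsne)).2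
      have hgt : ∀ j, e < j → h.coeff j ∈ q := by
        intro j hj
        by_contra hjq
        have hjs : j ∈ s := Finset.mem_filter.mpr
          ⟨Polynomial.mem_support_iff.mpr (fun h0 => hjq (h0 ▸ q.zero_mem)), hjq⟩
        exact absurd (s.le_max' j hjs) (not_le.mpr hj)
      -- key computation
      have hhg : h * g ∈ N.map (Polynomial.C : A →+* Polynomial A) := by
        rw [hcg] at hhp
        exact Ideal.mem_colon_span_singleton.mp hhp
      have htot : ∑ x ∈ Finset.HasAntidiagonal.antidiagonal (e + d), h.coeff x.1 * g.coeff x.2 ∈ N := by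
        have := Ideal.mem_map_C_iff.mp hhg (e + d)
        rwa [Polynomial.coeff_mul] at this
      have hmem : ((e, d) : ℕ × ℕ) ∈ Finset.HasAntidiagonal.antidiagonal (e + d) := by
        simp [Finset.HasAntidiagonal.mem_antidiagonal]
      rw [← Finset.add_sum_erase _ _ hmem] at htot
      have hrest : ∑ x ∈ (Finset.HasAntidiagonal.antidiagonal (e + d)).erase (e, d),
          h.coeff x.1 * g.coeff x.2 ∈ N := by
        refine Ideal.sum_mem _ (fun x hx => ?_)
        have hxne : x ≠ (e, d) := Finset.ne_of_mem_erase hx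
        have hxsum : x.1 + x.2 = e + d :=
          Finset.HasAntidiagonal.mem_antidiagonal.mp (Finset.mem_of_mem_erase hx)
        rcases lt_trichotomy x.1 e with hlt | heq | hgt'
        · have : d < x.2 := by omega
          exact N.mul_mem_left _ (hhigh _ this)
        · have : x.2 = d := by omega
          exact absurd (Prod.ext heq this) hxne
        · exact (haq g hcg _).mp (hgt _ hgt') _
      have hkey : h.coeff e * g.coeff d ∈ N := by
        simpa using N.sub_mem htot hrest
      -- descend with g₂
      set c := h.coeff e with hcdef
      have hCc : (Polynomial.C c : Polynomial A) ∉ p := fun hmem' => hce (Ideal.mem_comap.mpr hmem')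
      set g₂ := Polynomial.C c * g with hg₂def
      have hg₂ : g₂ ∉ N.map (Polynomial.C : A →+* Polynomial A) := by
        intro hmem'
        apply hCc
        rw [hcg, Ideal.mem_colon_span_singleton]
        exact hmem'
      have hcg₂ : p = (N.map (Polynomial.C : A →+* Polynomial A)).colon (Ideal.span {g₂}) := by
        apply le_antisymm
        · intro y hy
          rw [Ideal.mem_colon_span_singleton]
          rw [hcg] at hy
          have := Ideal.mem_colon_span_singleton.mp hy
          have h2 : Polynomial.C c * (y * g) ∈ N.map (Polynomial.C : A →+* Polynomial A) :=
            Ideal.mul_mem_left _ _ this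
          have heq : y * g₂ = Polynomial.C c * (y * g) := by rw [hg₂def]; ring
          rw [heq]; exact h2
        · intro y hy
          rw [Ideal.mem_colon_span_singleton] at hy
          have h2 : (y * Polynomial.C c) * g ∈ N.map (Polynomial.C : A →+* Polynomial A) := by
            have heq : (y * Polynomial.C c) * g = y * g₂ := by rw [hg₂def]; ring
            rw [heq]; exact hy
          have h3 : y * Polynomial.C c ∈ p := by
            rw [hcg, Ideal.mem_colon_span_singleton]; exact h2
          rcases hp.mem_or_mem h3 with hy' | hc'
          · exact hy'
          · exact absurd hc' hCc
      have hhigh₂ : ∀ i, d - 1 < i → g₂.coeff i ∈ N := by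
        intro i hi
        rw [hg₂def, Polynomial.coeff_C_mul]
        rcases lt_or_ge d i with hlt | hge
        · exact N.mul_mem_left _ (hhigh _ hlt)
        · have : i = d := by omega
          rw [this]
          exact hkey
      rcases Nat.eq_zero_or_pos d with rfl | hd
      · exact hg₂ (Ideal.mem_map_C_iff.mpr (fun i => by
          rcases Nat.eq_zero_or_pos i with rfl | hi
          · simpa [hg₂def, Polynomial.coeff_C_mul] using hkey
          · exact hhigh₂ i (by omega)))
      · exact hnle (IH (d - 1) (by omega) g₂ hg₂ hcg₂ hhigh₂)
  have hle : p ≤ q.map (Polynomial.C : A →+* Polynomial A) :=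
    descent f.natDegree f hf hcolon (fun i hi => by
      rw [Polynomial.coeff_eq_zero_of_natDegree_lt hi]; exact N.zero_mem)
  have hmapeq : p = q.map (Polynomial.C : A →+* Polynomial A) :=
    le_antisymm hle Ideal.map_comap_le
  have hprod : (∏ i ∈ f.support, N.colon (Ideal.span {f.coeff i})) ≤ q := by
    refine le_trans Ideal.prod_le_inf ?_
    intro a ha
    rw [Submodule.mem_finsetInf] at ha
    refine (haq f hcolon a).mpr (fun m => ?_)
    by_cases hm : m ∈ f.support
    · exact Ideal.mem_colon_span_singleton.mp (ha m hm)
    · rw [Polynomial.notMem_support_iff.mp hm, mul_zero]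
      exact N.zero_mem
  obtain ⟨i, hi, hlei⟩ := (hq.prod_le).mp hprod
  refine ⟨f.coeff i, ?_, ?_, hmapeq⟩
  · intro hcN
    refine hq.ne_top ((Ideal.eq_top_iff_one q).mpr (hlei ?_))
    rw [Ideal.mem_colon_span_singleton, one_mul]
    exact hcN
  · refine le_antisymm hlei (fun a ha => ?_)
    rw [Ideal.mem_colon_span_singleton]
    exact (haq f hcolon a).mp ha i

lemma spanXpow_mul_cancel {A : Type*} [CommRing A] [IsDomain A]
    (M : Ideal (Polynomial A)) (k : ℕ) (g : Polynomial A) :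
    Polynomial.X ^ k * g ∈ Ideal.span {(Polynomial.X : Polynomial A) ^ k} * M ↔ g ∈ M := by
  rw [Ideal.mem_span_singleton_mul]
  constructor
  · rintro ⟨z, hz, he⟩
    have := mul_left_cancel₀ (pow_ne_zero k Polynomial.X_ne_zero) he
    rwa [← this]
  · intro hg
    exact ⟨g, hg, rfl⟩

lemma case_split {A : Type*} [CommRing A] [IsDomain A] [IsNoetherianRing A] {N : Ideal A}
    {k : ℕ} (hk : 1 ≤ k) {p : Ideal (Polynomial A)} (hp : p.IsPrime) {f : Polynomial A}
    (hf : f ∉ (Ideal.span {(Polynomial.X : Polynomial A)} *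
        N.map (Polynomial.C : A →+* Polynomial A)) ^ k)
    (hcolon : p = ((Ideal.span {(Polynomial.X : Polynomial A)} *
        N.map (Polynomial.C : A →+* Polynomial A)) ^ k).colon (Ideal.span {f})) :
    p = Ideal.span {(Polynomial.X : Polynomial A)} ∨
      ∃ f', f' ∉ (N ^ k).map (Polynomial.C : A →+* Polynomial A) ∧
        p = ((N ^ k).map (Polynomial.C : A →+* Polynomial A)).colon (Ideal.span {f'}) := by
  have hJk : (Ideal.span {(Polynomial.X : Polynomial A)} *
      N.map (Polynomial.C : A →+* Polynomial A)) ^ k =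
      Ideal.span {(Polynomial.X : Polynomial A) ^ k} *
      (N ^ k).map (Polynomial.C : A →+* Polynomial A) := by
    rw [mul_pow, Ideal.span_singleton_pow, Ideal.map_pow]
  by_cases hex : ∃ g, g * f ∈ Ideal.span {(Polynomial.X : Polynomial A) ^ k} ∧
      g * f ∉ (Ideal.span {(Polynomial.X : Polynomial A)} *
        N.map (Polynomial.C : A →+* Polynomial A)) ^ k
  · right
    obtain ⟨g, hg1, hg2⟩ := hex
    have hgp : g ∉ p := by
      intro hgp
      rw [hcolon, Ideal.mem_colon_span_singleton] at hgp
      exact hg2 hgp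
    obtain ⟨f', hf'⟩ := Ideal.mem_span_singleton.mp hg1
    refine ⟨f', ?_, ?_⟩
    · intro hmem
      apply hg2
      rw [hJk, hf']
      exact (spanXpow_mul_cancel _ k f').mpr hmem
    · ext y
      rw [Ideal.mem_colon_span_singleton]
      constructor
      · intro hyp
        have h1 : y * f ∈ (Ideal.span {(Polynomial.X : Polynomial A)} *
            N.map (Polynomial.C : A →+* Polynomial A)) ^ k := by
          rw [hcolon, Ideal.mem_colon_span_singleton] at hyp
          exact hyp
        have h2 : Polynomial.X ^ k * (y * f') ∈ (Ideal.span {(Polynomial.X : Polynomial A)} *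
            N.map (Polynomial.C : A →+* Polynomial A)) ^ k := by
          have heq : Polynomial.X ^ k * (y * f') = g * (y * f) := by
            rw [show g * (y * f) = y * (g * f) by ring, hf']; ring
          rw [heq]
          exact Ideal.mul_mem_left _ _ h1
        rw [hJk] at h2
        exact (spanXpow_mul_cancel _ k (y * f')).mp h2
      · intro hyf'
        have h2 : Polynomial.X ^ k * (y * f') ∈
            Ideal.span {(Polynomial.X : Polynomial A) ^ k} *
            (N ^ k).map (Polynomial.C : A →+* Polynomial A) :=
          (spanXpow_mul_cancel _ k (y * f')).mpr hyf'
        rw [← hJk] at h2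
        have heq : Polynomial.X ^ k * (y * f') = (y * g) * f := by
          rw [show (y * g) * f = y * (g * f) by ring, hf']; ring
        rw [heq] at h2
        have h3 : y * g ∈ p := by
          rw [hcolon, Ideal.mem_colon_span_singleton]
          exact h2
        rcases hp.mem_or_mem h3 with hy | hgg
        · exact hy
        · exact absurd hgg hgp
  · left
    push_neg at hex
    have hpeq : p = (Ideal.span {(Polynomial.X : Polynomial A) ^ k}).colon
        (Ideal.span {f}) := by
      apply le_antisymm
      · intro y hy
        rw [hcolon, Ideal.mem_colon_span_singleton] at hy
        rw [Ideal.mem_colon_span_singleton]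
        refine Set.mem_of_mem_of_subset hy ?_
        rw [hJk]
        exact Ideal.mul_le_left
      · intro y hy
        rw [Ideal.mem_colon_span_singleton] at hy
        rw [hcolon, Ideal.mem_colon_span_singleton]
        exact hex _ hy
    have hfne : f ≠ 0 := fun h0 => hf (h0 ▸ zero_mem _)
    have hfX : f ∉ Ideal.span {(Polynomial.X : Polynomial A) ^ k} := by
      intro hmem
      refine hp.ne_top ((Ideal.eq_top_iff_one p).mpr ?_)
      rw [hpeq, Ideal.mem_colon_span_singleton, one_mul]
      exact hmem
    haveI : WfDvdMonoid (Polynomial A) := IsNoetherianRing.wfDvdMonoid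
    obtain ⟨d, u, hu, hfe⟩ := WfDvdMonoid.max_power_factor hfne Polynomial.irreducible_X
    have hdk : d < k := by
      by_contra hge
      push_neg at hge
      apply hfX
      rw [Ideal.mem_span_singleton, hfe]
      exact Dvd.dvd.mul_right (pow_dvd_pow _ hge) u
    apply le_antisymm
    · intro y hy
      rw [hpeq, Ideal.mem_colon_span_singleton] at hy
      rw [Ideal.mem_span_singleton] at hy ⊢
      have hy2 : Polynomial.X ^ d * Polynomial.X ^ (k - d) ∣ Polynomial.X ^ d * (y * u) := by
        rw [← pow_add]
        have : d + (k - d) = k := by omega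
        rw [this, show Polynomial.X ^ d * (y * u) = y * (Polynomial.X ^ d * u) by ring, ← hfe]
        exact hy
      have hy3 : Polynomial.X ^ (k - d) ∣ y * u :=
        (mul_dvd_mul_iff_left (pow_ne_zero d Polynomial.X_ne_zero)).mp hy2
      have hy4 : Polynomial.X ∣ y * u :=
        dvd_trans (dvd_pow_self _ (by omega : k - d ≠ 0)) hy3
      rcases Polynomial.prime_X.dvd_or_dvd hy4 with h | h
      · exact h
      · exact absurd h hu
    · rw [Ideal.span_le, Set.singleton_subset_iff]
      have hXkd : (Polynomial.X : Polynomial A) ^ (k - d) ∈ p := by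
        rw [hpeq, Ideal.mem_colon_span_singleton, Ideal.mem_span_singleton, hfe]
        rw [show Polynomial.X ^ (k - d) * (Polynomial.X ^ d * u) = Polynomial.X ^ k * u by
          rw [← mul_assoc, ← pow_add, show k - d + d = k from by omega]]
        exact dvd_mul_right _ _
      exact hp.mem_of_pow_mem _ hXkd

lemma colon_eq_map_of_colon_base {A : Type*} [CommRing A] [IsDomain A] {N q : Ideal A} {c : A}
    (hq : N.colon (Ideal.span {c}) = q) :
    (Ideal.span {(Polynomial.X : Polynomial A)} *
      N.map (Polynomial.C : A →+* Polynomial A)).colon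
      (Ideal.span {Polynomial.X * Polynomial.C c}) =
    q.map (Polynomial.C : A →+* Polynomial A) := by
  ext h
  rw [Ideal.mem_colon_span_singleton, Ideal.mem_map_C_iff, Ideal.mem_span_singleton_mul]
  constructor
  · rintro ⟨z, hz, hze⟩
    have hz2 : z = h * Polynomial.C c :=
      mul_left_cancel₀ Polynomial.X_ne_zero (by rw [hze]; ring)
    subst hz2
    intro m
    have := Ideal.mem_map_C_iff.mp hz m
    rw [Polynomial.coeff_mul_C] at this
    rw [← hq, Ideal.mem_colon_span_singleton]
    exact this
  · intro hcoeff
    refine ⟨h * Polynomial.C c, Ideal.mem_map_C_iff.mpr (fun m => ?_), by ring⟩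
    rw [Polynomial.coeff_mul_C]
    have := hcoeff m
    rw [← hq, Ideal.mem_colon_span_singleton] at this
    exact this

lemma colon_eq_spanX {A : Type*} [CommRing A] [IsDomain A] {N : Ideal A} {c : A}
    (hc : c ∈ N) (hc0 : c ≠ 0) :
    (Ideal.span {(Polynomial.X : Polynomial A)} *
      N.map (Polynomial.C : A →+* Polynomial A)).colon
      (Ideal.span {(Polynomial.C c : Polynomial A)}) =
    Ideal.span {(Polynomial.X : Polynomial A)} := by
  ext h
  rw [Ideal.mem_colon_span_singleton, Ideal.mem_span_singleton_mul]
  constructor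
  · rintro ⟨z, hz, hze⟩
    rw [Ideal.mem_span_singleton, Polynomial.X_dvd_iff]
    have h0 : (h * Polynomial.C c).coeff 0 = 0 := by
      rw [← hze, Polynomial.mul_coeff_zero, Polynomial.coeff_X_zero, zero_mul]
    rw [Polynomial.coeff_mul_C] at h0
    exact (mul_eq_zero.mp h0).resolve_right hc0
  · intro hX
    obtain ⟨h₁, rfl⟩ := Ideal.mem_span_singleton.mp hX
    exact ⟨h₁ * Polynomial.C c, Ideal.mul_mem_left _ _ (Ideal.mem_map_of_mem _ hc),
      by ring⟩

lemma main_poly {A : Type*} [CommRing A] [IsDomain A] [IsNoetherianRing A] {I : Ideal A}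
    (hntf : NormallyTorsionFree I) :
    NormallyTorsionFree (Ideal.span {(Polynomial.X : Polynomial A)} *
      I.map (Polynomial.C : A →+* Polynomial A)) := by
  intro k hk P hP
  rw [mem_assPrimes_quot_iff] at hP ⊢
  obtain ⟨hprime, f, hcolon⟩ := hP
  have hfJ : f ∉ (Ideal.span {(Polynomial.X : Polynomial A)} *
      I.map (Polynomial.C : A →+* Polynomial A)) ^ k := by
    intro hmem
    refine hprime.ne_top ((Ideal.eq_top_iff_one P).mpr ?_)
    rw [hcolon, Ideal.mem_colon_span_singleton, one_mul]
    exact hmem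
  by_cases hI : I = ⊥
  · have hJbot : Ideal.span {(Polynomial.X : Polynomial A)} *
        I.map (Polynomial.C : A →+* Polynomial A) = ⊥ := by
      rw [hI, Ideal.map_bot, Ideal.mul_bot]
    refine ⟨hprime, f, ?_⟩
    rw [hcolon, hJbot, ← Ideal.zero_eq_bot, zero_pow (by omega : k ≠ 0)]
  · rcases case_split hk hprime hfJ hcolon with hcase | ⟨f', hf', hcolon'⟩
    · obtain ⟨c, hcI, hc0⟩ := Submodule.exists_mem_ne_zero_of_ne_bot hI
      exact ⟨hprime, Polynomial.C c, hcase.trans (colon_eq_spanX hcI hc0).symm⟩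
    · obtain ⟨c, hc, hcq, hPmap⟩ := poly_colon_structure hprime hf' hcolon'
      haveI := hprime
      have hqprime : (P.comap (Polynomial.C : A →+* Polynomial A)).IsPrime :=
        Ideal.comap_isPrime _ _
      have hqass : P.comap (Polynomial.C : A →+* Polynomial A) ∈
          associatedPrimes A (A ⧸ I ^ k) :=
        mem_assPrimes_quot_iff.mpr ⟨hqprime, c, hcq.symm⟩
      have hqass1 := hntf k hk hqass
      rw [mem_assPrimes_quot_iff] at hqass1
      obtain ⟨-, c₁, hc₁⟩ := hqass1
      refine ⟨hprime, Polynomial.X * Polynomial.C c₁, ?_⟩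
      rw [colon_eq_map_of_colon_base hc₁.symm, ← hPmap]


/-- If a monomial ideal `I ⊆ K[x_1,…,x_n]` is normally torsion-free, then so is
`x_w · I` in the polynomial ring with one extra variable `x_w` (here `x_w = X none`). -/
theorem ntf_smul_new_variable {K : Type*} [Field K] {n : ℕ}
    (I : Ideal (MvPolynomial (Fin n) K)) (hI : IsMonomialIdeal I)
    (hntf : NormallyTorsionFree I) :
    NormallyTorsionFree
      (Ideal.span {(X none : MvPolynomial (Option (Fin n)) K)} *
        Ideal.map (rename (Option.some : Fin n → Option (Fin n))) I) := by
  classical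
  let e : MvPolynomial (Option (Fin n)) K ≃+* Polynomial (MvPolynomial (Fin n) K) :=
    (optionEquivLeft K (Fin n)).toRingEquiv
  have hren : ∀ g : MvPolynomial (Fin n) K,
      e ((rename (Option.some : Fin n → Option (Fin n))) g) = Polynomial.C g := by
    intro g
    have hext : (e : MvPolynomial (Option (Fin n)) K →+*
          Polynomial (MvPolynomial (Fin n) K)).comp
        ((rename (Option.some : Fin n → Option (Fin n))).toRingHom) =
        (Polynomial.C : MvPolynomial (Fin n) K →+*
          Polynomial (MvPolynomial (Fin n) K)) := by
      apply MvPolynomial.ringHom_ext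
      · intro r
        simp [e, rename_C, optionEquivLeft_C]
      · intro i
        simp [e, rename_X, optionEquivLeft_X_some]
    exact RingHom.congr_fun hext g
  have hmapJ : (Ideal.span {(X none : MvPolynomial (Option (Fin n)) K)} *
      Ideal.map (rename (Option.some : Fin n → Option (Fin n))) I).map e =
      Ideal.span {(Polynomial.X : Polynomial (MvPolynomial (Fin n) K))} *
      I.map (Polynomial.C : MvPolynomial (Fin n) K →+*
        Polynomial (MvPolynomial (Fin n) K)) := by
    rw [Ideal.map_mul]
    congr 1
    · rw [Ideal.map_span, Set.image_singleton]
      have hx : e (X none) = Polynomial.X := by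
        simp [e, optionEquivLeft_X_none]
      rw [hx]
    · apply le_antisymm
      · rw [Ideal.map_le_iff_le_comap, Ideal.map_le_iff_le_comap]
        intro x hx
        rw [Ideal.mem_comap, Ideal.mem_comap, hren x]
        exact Ideal.mem_map_of_mem _ hx
      · rw [Ideal.map_le_iff_le_comap]
        intro x hx
        rw [Ideal.mem_comap, ← hren x]
        exact Ideal.mem_map_of_mem _ (Ideal.mem_map_of_mem _ hx)
  intro k hk P hP
  rw [mem_assPrimes_quot_iff] at hP ⊢
  obtain ⟨hprime, f, hcolon⟩ := hP
  have hQ : P.map e ∈ associatedPrimes (Polynomial (MvPolynomial (Fin n) K))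
      (Polynomial (MvPolynomial (Fin n) K) ⧸
        (Ideal.span {(Polynomial.X : Polynomial (MvPolynomial (Fin n) K))} *
          I.map (Polynomial.C : MvPolynomial (Fin n) K →+*
            Polynomial (MvPolynomial (Fin n) K))) ^ k) := by
    rw [mem_assPrimes_quot_iff]
    refine ⟨isPrime_map_equiv e hprime, e f, ?_⟩
    rw [hcolon, colon_map_equiv, Ideal.map_pow, hmapJ]
  have hQ1 := main_poly hntf k hk hQ
  rw [mem_assPrimes_quot_iff] at hQ1
  obtain ⟨-, g, hg⟩ := hQ1
  refine ⟨hprime, e.symm g, ?_⟩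
  have h2 := congrArg (Ideal.map (e.symm :
      Polynomial (MvPolynomial (Fin n) K) ≃+* MvPolynomial (Option (Fin n)) K)) hg
  rw [colon_map_equiv] at h2
  rw [Ideal.map_symm, Ideal.comap_map_of_bijective _ e.bijective] at h2
  rw [Ideal.map_symm, ← hmapJ, Ideal.comap_map_of_bijective _ e.bijective] at h2
  exact h2
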